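/- Let p ≥ 2, M ≥ 1, let γ_1, …, γ_M ∈ ℝ, for each 1 ≤ i ≤ p and 1 ≤ m ≤ M let h_{im} : ℝ → ℝ be differentiable with measurable derivative, and let ρ_1, …, ρ_p : ℝ → ℝ be nonnegative measurable probability densities. Assume for every i, m that h_{im} and h'_{im} are square-integrable with respect to the measure with density ρ_i against Lebesgue measure. Define f(x) = γ_0 + Σ_{m=1}^M γ_m Π_{k=1}^p h_{km}(x_k) and ρ(x) = Π_{i=1}^p ρ_i(x_i). Then for all i ≠ j, the off-diagonal entry of the C matrix of (f, ρ) satisfies C_{ij} = Σ_{m1=1}^M Σ_{m2=1}^M γ_{m1} γ_{m2} I_1^{(i)}[m1, m2] I_1^{(j)}[m2, m1] Π_{k ∉ {i,j}} I_2^{(k)}[m1, m2], where I_1^{(i)}[m1, m2] = ∫_ℝ h'_{i m1}(x) h_{i m2}(x) ρ_i(x) dx and I_2^{(k)}[m1, m2] = ∫_ℝ h_{k m1}(x) h_{k m2}(x) ρ_k(x) dx. -/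

import Mathlib

open MeasureTheory Matrix

/-- The `i`-th partial derivative of `f` at `x`. -/
noncomputable def partialDeriv' {p : ℕ} (f : (Fin p → ℝ) → ℝ) (i : Fin p)
    (x : Fin p → ℝ) : ℝ :=
  fderiv ℝ f x (Pi.single i 1)

/-- The `C` matrix of `(f, ρ)`: `C i j = ∫ ∂f/∂xᵢ ∂f/∂xⱼ ρ`. -/
noncomputable def Cmat {p : ℕ} (f : (Fin p → ℝ) → ℝ) (ρ : (Fin p → ℝ) → ℝ) :
    Matrix (Fin p) (Fin p) ℝ :=
  Matrix.of fun i j => ∫ x, partialDeriv' f i x * partialDeriv' f j x * ρ x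

/-- Cauchy–Schwarz type integrability: the product of two `L²(ρ dx)` functions
times the density `ρ` is Lebesgue-integrable. -/
lemma integrable_mul_mul_density (g1 g2 ρi : ℝ → ℝ) (hρ : ∀ x, 0 ≤ ρi x)
    (hm : Measurable ρi)
    (h1 : MemLp g1 2 (volume.withDensity fun x => ENNReal.ofReal (ρi x)))
    (h2 : MemLp g2 2 (volume.withDensity fun x => ENNReal.ofReal (ρi x))) :
    Integrable (fun t => g1 t * g2 t * ρi t) := by
  have hmul : MemLp (g2 • g1) 1 (volume.withDensity fun x => ENNReal.ofReal (ρi x)) :=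
    h1.smul h2 (hpqr := ⟨by rw [inv_one]; exact ENNReal.inv_two_add_inv_two⟩)
  have hint := memLp_one_iff_integrable.mp hmul
  rw [integrable_withDensity_iff (by fun_prop) (by simp [ENNReal.ofReal_lt_top])] at hint
  refine hint.congr (Filter.Eventually.of_forall fun x => ?_)
  simp only [Pi.smul_apply, smul_eq_mul, Pi.mul_apply, ENNReal.toReal_ofReal (hρ x)]
  ring

/-- Partial derivative of a sum of tensor products. -/
lemma partialDeriv'_tensor {p M : ℕ} (γ0 : ℝ) (γ : Fin M → ℝ)
    (h : Fin p → Fin M → ℝ → ℝ) (hh : ∀ i m, Differentiable ℝ (h i m))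
    (i : Fin p) (x : Fin p → ℝ) :
    partialDeriv' (fun x => γ0 + ∑ m, γ m * ∏ k, h k m (x k)) i x
      = ∑ m, γ m * (deriv (h i m) (x i) * ∏ k ∈ Finset.univ.erase i, h k m (x k)) := by
  classical
  have hco : ∀ (k : Fin p) (m : Fin M), HasFDerivAt (fun y : Fin p → ℝ => h k m (y k))
      (((1 : ℝ →L[ℝ] ℝ).smulRight (deriv (h k m) (x k))).comp
        (ContinuousLinearMap.proj k : (Fin p → ℝ) →L[ℝ] ℝ)) x := by
    intro k m
    have hproj : HasFDerivAt (fun y : Fin p → ℝ => y k)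
        ((ContinuousLinearMap.proj k : (Fin p → ℝ) →L[ℝ] ℝ)) x := hasFDerivAt_apply k x
    exact ((hh k m (x k)).hasDerivAt.hasFDerivAt).comp x hproj
  have hF : ∀ m : Fin M, HasFDerivAt (fun y : Fin p → ℝ => ∏ k, h k m (y k))
      (∑ k, (∏ j ∈ Finset.univ.erase k, h j m (x j)) •
        (((1 : ℝ →L[ℝ] ℝ).smulRight (deriv (h k m) (x k))).comp
          (ContinuousLinearMap.proj k))) x := by
    intro m
    exact HasFDerivAt.finset_prod (fun k _ => hco k m)
  have hf : HasFDerivAt (fun y : Fin p → ℝ => γ0 + ∑ m, γ m * ∏ k, h k m (y k))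
      (∑ m, γ m • (∑ k, (∏ j ∈ Finset.univ.erase k, h j m (x j)) •
        (((1 : ℝ →L[ℝ] ℝ).smulRight (deriv (h k m) (x k))).comp
          (ContinuousLinearMap.proj k)))) x := by
    have := HasFDerivAt.fun_sum (fun m (_ : m ∈ Finset.univ) => (hF m).const_mul (γ m))
    exact this.const_add γ0
  rw [partialDeriv', hf.fderiv]
  simp only [ContinuousLinearMap.coe_sum', Finset.sum_apply, ContinuousLinearMap.coe_smul',
    Pi.smul_apply, ContinuousLinearMap.coe_comp', Function.comp_apply,
    ContinuousLinearMap.proj_apply, ContinuousLinearMap.smulRight_apply,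
    ContinuousLinearMap.one_apply, Pi.single_apply, smul_eq_mul]
  refine Finset.sum_congr rfl fun m _ => ?_
  rw [Finset.sum_eq_single i]
  · simp only [if_pos rfl, if_true, mul_one]; ring
  · intro k _ hk; simp [hk]
  · intro hi; exact absurd (Finset.mem_univ i) hi

theorem Cmat_offdiagonal_tensor {p M : ℕ} (hp : 2 ≤ p) (hM : 1 ≤ M)
    (γ0 : ℝ) (γ : Fin M → ℝ) (h : Fin p → Fin M → ℝ → ℝ)
    (hh : ∀ i m, Differentiable ℝ (h i m))
    (hh' : ∀ i m, Measurable (deriv (h i m)))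
    (ρ : Fin p → ℝ → ℝ) (hρ_nonneg : ∀ i x, 0 ≤ ρ i x)
    (hρ_meas : ∀ i, Measurable (ρ i))
    (hρ_int : ∀ i, Integrable (ρ i)) (hρ_prob : ∀ i, ∫ x, ρ i x = 1)
    (hsq : ∀ i m, MemLp (h i m) 2 (volume.withDensity fun x => ENNReal.ofReal (ρ i x)))
    (hsq' : ∀ i m,
      MemLp (deriv (h i m)) 2 (volume.withDensity fun x => ENNReal.ofReal (ρ i x)))
    (f : (Fin p → ℝ) → ℝ)
    (hfdef : ∀ x, f x = γ0 + ∑ m, γ m * ∏ k, h k m (x k))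
    (ρprod : (Fin p → ℝ) → ℝ) (hρprod : ∀ x, ρprod x = ∏ i, ρ i (x i)) :
    ∀ i j, i ≠ j → Cmat f ρprod i j =
      ∑ m1, ∑ m2, γ m1 * γ m2 *
        (∫ x, deriv (h i m1) x * h i m2 x * ρ i x) *
        (∫ x, deriv (h j m2) x * h j m1 x * ρ j x) *
        ∏ k ∈ (Finset.univ.erase i).erase j, ∫ x, h k m1 x * h k m2 x * ρ k x := by
  classical
  intro i j hij
  have hf : f = fun x => γ0 + ∑ m, γ m * ∏ k, h k m (x k) := funext hfdef
  subst hf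
  have hρf : ρprod = fun x => ∏ k, ρ k (x k) := funext hρprod
  subst hρf
  -- finset bookkeeping
  set s : Finset (Fin p) := (Finset.univ.erase i).erase j with hs
  have hjmem : j ∈ Finset.univ.erase i := Finset.mem_erase.mpr ⟨hij.symm, Finset.mem_univ j⟩
  have e1 : Finset.univ.erase i = insert j s := (Finset.insert_erase hjmem).symm
  have hjs : j ∉ s := Finset.notMem_erase j _
  have his : i ∉ s := fun hi => (Finset.notMem_erase i Finset.univ)
    (Finset.mem_of_mem_erase hi)
  have hi_ins : i ∉ insert j s := by
    simp only [Finset.mem_insert, not_or]; exact ⟨hij, his⟩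
  have e0 : (Finset.univ : Finset (Fin p)) = insert i (insert j s) := by
    rw [← e1, Finset.insert_erase (Finset.mem_univ i)]
  have e2 : Finset.univ.erase j = insert i s := by
    have : (Finset.univ.erase j).erase i = s := by rw [hs, Finset.erase_right_comm]
    rw [← this, Finset.insert_erase
      (Finset.mem_erase.mpr ⟨hij, Finset.mem_univ i⟩)]
  -- the per-coordinate functions
  set g : Fin M → Fin M → Fin p → ℝ → ℝ := fun m1 m2 k =>
    if k = i then fun t => deriv (h i m1) t * h i m2 t * ρ i t
    else if k = j then fun t => deriv (h j m2) t * h j m1 t * ρ j t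
    else fun t => h k m1 t * h k m2 t * ρ k t with hg
  have hgi : ∀ m1 m2, g m1 m2 i = fun t => deriv (h i m1) t * h i m2 t * ρ i t := by
    intro m1 m2; simp [hg]
  have hgj : ∀ m1 m2, g m1 m2 j = fun t => deriv (h j m2) t * h j m1 t * ρ j t := by
    intro m1 m2; simp [hg, hij.symm]
  have hgk : ∀ m1 m2 k, k ∈ s → g m1 m2 k = fun t => h k m1 t * h k m2 t * ρ k t := by
    intro m1 m2 k hk
    have hki : k ≠ i := Finset.ne_of_mem_erase (Finset.mem_of_mem_erase hk)
    have hkj : k ≠ j := Finset.ne_of_mem_erase hk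
    simp [hg, hki, hkj]
  have hgint : ∀ m1 m2 k, Integrable (g m1 m2 k) := by
    intro m1 m2 k
    by_cases hki : k = i
    · subst hki; rw [hgi]
      exact integrable_mul_mul_density _ _ _ (hρ_nonneg k) (hρ_meas k)
        (hsq' k m1) (hsq k m2)
    by_cases hkj : k = j
    · subst hkj; rw [hgj]
      exact integrable_mul_mul_density _ _ _ (hρ_nonneg k) (hρ_meas k)
        (hsq' k m2) (hsq k m1)
    · have : g m1 m2 k = fun t => h k m1 t * h k m2 t * ρ k t := by simp [hg, hki, hkj]
      rw [this]
      exact integrable_mul_mul_density _ _ _ (hρ_nonneg k) (hρ_meas k)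
        (hsq k m1) (hsq k m2)
  -- pointwise identity
  have hpt : ∀ x : Fin p → ℝ,
      partialDeriv' (fun x => γ0 + ∑ m, γ m * ∏ k, h k m (x k)) i x *
        partialDeriv' (fun x => γ0 + ∑ m, γ m * ∏ k, h k m (x k)) j x *
        (∏ k, ρ k (x k))
      = ∑ m1, ∑ m2, γ m1 * γ m2 * ∏ k, g m1 m2 k (x k) := by
    intro x
    rw [partialDeriv'_tensor γ0 γ h hh i x, partialDeriv'_tensor γ0 γ h hh j x,
      Finset.sum_mul_sum, Finset.sum_mul]
    refine Finset.sum_congr rfl fun m1 _ => ?_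
    rw [Finset.sum_mul]
    refine Finset.sum_congr rfl fun m2 _ => ?_
    have hP1 : (∏ k ∈ Finset.univ.erase i, h k m1 (x k))
        = h j m1 (x j) * ∏ k ∈ s, h k m1 (x k) := by
      rw [e1, Finset.prod_insert hjs]
    have hP2 : (∏ k ∈ Finset.univ.erase j, h k m2 (x k))
        = h i m2 (x i) * ∏ k ∈ s, h k m2 (x k) := by
      rw [e2, Finset.prod_insert his]
    have hPρ : (∏ k, ρ k (x k))
        = ρ i (x i) * (ρ j (x j) * ∏ k ∈ s, ρ k (x k)) := by
      rw [e0, Finset.prod_insert hi_ins, Finset.prod_insert hjs]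
    have hPg : (∏ k, g m1 m2 k (x k))
        = (deriv (h i m1) (x i) * h i m2 (x i) * ρ i (x i)) *
          ((deriv (h j m2) (x j) * h j m1 (x j) * ρ j (x j)) *
            ∏ k ∈ s, (h k m1 (x k) * h k m2 (x k) * ρ k (x k))) := by
      rw [e0, Finset.prod_insert hi_ins, Finset.prod_insert hjs, hgi, hgj]
      congr 2
      exact Finset.prod_congr rfl fun k hk => by rw [hgk m1 m2 k hk]
    rw [hP1, hP2, hPρ, hPg, Finset.prod_mul_distrib, Finset.prod_mul_distrib]
    ring
  -- compute the integral
  rw [Cmat, Matrix.of_apply]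
  simp only [hpt]
  rw [volume_pi]
  rw [integral_finset_sum _ (fun m1 _ => integrable_finset_sum _
    (fun m2 _ => ((Integrable.fintype_prod (𝕜 := ℝ) (hgint m1 m2)).const_mul _)))]
  refine Finset.sum_congr rfl fun m1 _ => ?_
  rw [integral_finset_sum _
    (fun m2 _ => ((Integrable.fintype_prod (𝕜 := ℝ) (hgint m1 m2)).const_mul _))]
  refine Finset.sum_congr rfl fun m2 _ => ?_
  rw [integral_const_mul, integral_fintype_prod_eq_prod (f := fun k => g m1 m2 k),
    e0, Finset.prod_insert hi_ins, Finset.prod_insert hjs, hgi, hgj]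
  rw [show (∏ k ∈ s, ∫ t, g m1 m2 k t)
      = ∏ k ∈ s, ∫ t, h k m1 t * h k m2 t * ρ k t from
    Finset.prod_congr rfl fun k hk => by rw [hgk m1 m2 k hk]]
  ring
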